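/- If a convergent interaction system has reaction functions that are all self-independent and have k-recall for some k ∈ ℤ+, then the system is strongly convergent: for every initial history H and fair schedule σ under which the trajectory converges to a state a, there exists T such that for every fair schedule σ' agreeing with σ on steps 1 through T, the (H,σ')-trajectory also converges to a. -/

import Mathlib

variable {n : ℕ} {A : Fin n → Type*}

/-- A schedule is fair if it activates every node infinitely often. -/
def Fair (σ : ℕ → Finset (Fin n)) : Prop := ∀ i : Fin n, ∀ T : ℕ, ∃ t ≥ T, i ∈ σ t

/-- A sequence of states converges to `b` if it is eventually constantly `b`. -/
def ConvTo (x : ℕ → ∀ j, A j) (b : ∀ j, A j) : Prop := ∃ T : ℕ, ∀ t > T, x t = b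

/-- `x` is the `(H,σ)`-trajectory of the interaction system with (history-dependent)
reaction functions `f`: it extends the initial history `H`, and at each time
`t ≥ |H|` every activated node applies its reaction function to the entire history
so far while the other nodes keep their previous actions. -/
def IsTraj (f : ∀ i : Fin n, List (∀ j, A j) → A i) (σ : ℕ → Finset (Fin n))
    (H : List (∀ j, A j)) (x : ℕ → ∀ j, A j) : Prop :=
  (∀ (t : ℕ) (ht : t < H.length), x t = H.get ⟨t, ht⟩) ∧
  (∀ t : ℕ, H.length ≤ t → ∀ i : Fin n,
    x t i = if i ∈ σ t then f i (List.ofFn fun s : Fin t => x s) else x (t - 1) i)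

/-- `f` has `k`-recall: each reaction function depends only on the `k` most recent
states of the history and the time counter (the history's length). -/
def KRecall (k : ℕ) (f : ∀ i : Fin n, List (∀ j, A j) → A i) : Prop :=
  ∀ (i : Fin n) (L L' : List (∀ j, A j)), L.length = L'.length →
    L.reverse.take k = L'.reverse.take k → f i L = f i L'

/-- `f` is self-independent: each node's reaction function ignores that node's own
(past and present) actions in the history. -/
def SelfIndepH (f : ∀ i : Fin n, List (∀ j, A j) → A i) : Prop :=
  ∀ (i : Fin n) (L L' : List (∀ j, A j)),
    List.Forall₂ (fun a b : ∀ j, A j => ∀ j : Fin n, j ≠ i → a j = b j) L L' →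
    f i L = f i L'

/-- The system is convergent: every fair trajectory from every (nonempty) initial
history is eventually constant. -/
def ConvergentH (f : ∀ i : Fin n, List (∀ j, A j) → A i) : Prop :=
  ∀ H : List (∀ j, A j), H ≠ [] → ∀ σ : ℕ → Finset (Fin n), Fair σ →
    ∀ x : ℕ → ∀ j, A j, IsTraj f σ H x → ∃ b, ConvTo x b

/-- helper: equality of the last `k` entries. -/
lemma takeRev_eq {α : Type*} (k : ℕ) (L L' : List α) (hlen : L.length = L'.length)
    (h : ∀ m : ℕ, m < k → L[L.length - 1 - m]? = L'[L'.length - 1 - m]?) :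
    L.reverse.take k = L'.reverse.take k := by
  apply List.ext_getElem?
  intro m
  rw [List.getElem?_take, List.getElem?_take]
  split
  · rename_i hm
    by_cases hm2 : m < L.length
    · rw [List.getElem?_reverse hm2, List.getElem?_reverse (by omega : m < L'.length)]
      exact h m hm
    · rw [List.getElem?_eq_none (by simpa using by omega : L.reverse.length ≤ m),
        List.getElem?_eq_none (by simp; omega)]
  · rfl

/-- Evaluating a reaction function on a history whose last `k` states agree with `a`
off coordinate `i` gives the same value as on the constant-`a` history of the same
length. -/
lemma evalLemma {k : ℕ} {f : ∀ i : Fin n, List (∀ j, A j) → A i}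
    (hsi : SelfIndepH f) (hkr : KRecall k f) (i : Fin n) (t : ℕ)
    (u : ℕ → ∀ j, A j) (a : ∀ j, A j)
    (h : ∀ s, s < t → t - k ≤ s → ∀ j, j ≠ i → u s j = a j) :
    f i (List.ofFn fun s : Fin t => u s) = f i (List.replicate t a) := by
  classical
  have h1 : f i (List.ofFn fun s : Fin t => u s)
      = f i (List.ofFn fun s : Fin t => Function.update (u s) i (a i)) := by
    apply hsi
    rw [List.forall₂_iff_get]
    refine ⟨by simp, ?_⟩
    intro p h1 h2 j hj
    simp only [List.get_ofFn]
    rw [Function.update_of_ne hj]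
    rfl
  rw [h1]
  apply hkr
  · simp
  · apply takeRev_eq
    · simp
    intro m hm
    simp only [List.length_ofFn, List.length_replicate, List.getElem?_ofFn,
      List.getElem?_replicate]
    rcases Nat.eq_zero_or_pos t with ht | ht
    · subst ht; simp [List.ofFnNthVal]
    · have hidx : t - 1 - m < t := by omega
      rw [dif_pos hidx, if_pos hidx]
      congr 1
      funext j
      by_cases hj : j = i
      · subst hj; rw [Function.update_self]
      · rw [Function.update_of_ne hj]
        exact h _ hidx (by omega) j hj

/-- The canonical trajectory determined by `f`, `σ`, `H`. -/
noncomputable def traj (f : ∀ i : Fin n, List (∀ j, A j) → A i) (σ : ℕ → Finset (Fin n))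
    (H : List (∀ j, A j)) (t : ℕ) : ∀ j, A j :=
  if h : t < H.length then H.get ⟨t, h⟩
  else fun i => if i ∈ σ t then f i (List.ofFn fun s : Fin t => traj f σ H s)
    else if h1 : 0 < t then traj f σ H (t - 1) i else f i []
termination_by t
decreasing_by
  all_goals first | exact Fin.is_lt _ | omega

lemma traj_isTraj {f : ∀ i : Fin n, List (∀ j, A j) → A i} {σ : ℕ → Finset (Fin n)}
    {H : List (∀ j, A j)} (hH : H ≠ []) : IsTraj f σ H (traj f σ H) := by
  constructor
  · intro t ht
    rw [traj, dif_pos ht]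
  · intro t ht i
    have hnl : ¬ t < H.length := by omega
    have h1 : 0 < t := lt_of_lt_of_le (List.length_pos_iff.mpr hH) ht
    conv_lhs => rw [traj]
    rw [dif_neg hnl]
    by_cases hi : i ∈ σ t
    · rw [if_pos hi, if_pos hi]
    · rw [if_neg hi, if_neg hi, dif_pos h1]

/-- Trajectories with schedules agreeing up to `M` agree up to `M`. -/
lemma traj_unique {f : ∀ i : Fin n, List (∀ j, A j) → A i} {H : List (∀ j, A j)}
    (hH : H ≠ []) {σ σ' : ℕ → Finset (Fin n)} {x x' : ℕ → ∀ j, A j}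
    (hx : IsTraj f σ H x) (hx' : IsTraj f σ' H x') (M : ℕ)
    (hag : ∀ t, 1 ≤ t → t ≤ M → σ' t = σ t) : ∀ t ≤ M, x' t = x t := by
  intro t
  induction t using Nat.strong_induction_on with
  | _ t ih =>
    intro htM
    by_cases ht : t < H.length
    · rw [hx.1 t ht, hx'.1 t ht]
    · push_neg at ht
      have h1 : 1 ≤ t := le_trans (List.length_pos_iff.mpr hH) ht
      funext i
      rw [hx.2 t ht i, hx'.2 t ht i, hag t h1 htM]
      have hl : (List.ofFn fun s : Fin t => x' s) = (List.ofFn fun s : Fin t => x s) := by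
        congr 1
        funext s
        exact ih s s.isLt (by omega)
      rw [hl, ih (t-1) (by omega) (by omega)]

def seqRec (g : ℕ → ℕ → ℕ) (a0 : ℕ) : ℕ → ℕ
  | 0 => a0
  | m+1 => g m (seqRec g a0 m)

open Classical in
/-- Schedule that follows `σ` up to time `M` and afterwards activates exactly the
singleton `{act m}` at each event time `E m`. -/
noncomputable def mkSched (σ : ℕ → Finset (Fin n)) (M : ℕ) (E : ℕ → ℕ) (act : ℕ → Fin n) :
    ℕ → Finset (Fin n) := fun t =>
  if t ≤ M then σ t else if h : ∃ m, E m = t then {act h.choose} else ∅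

lemma mkSched_le {σ : ℕ → Finset (Fin n)} {M : ℕ} {E : ℕ → ℕ} {act : ℕ → Fin n}
    {t : ℕ} (h : t ≤ M) : mkSched σ M E act t = σ t := by
  simp [mkSched, h]

lemma mkSched_event {σ : ℕ → Finset (Fin n)} {M : ℕ} {E : ℕ → ℕ} {act : ℕ → Fin n}
    (hinj : Function.Injective E) {m : ℕ} (hM : M < E m) :
    mkSched σ M E act (E m) = {act m} := by
  have h : ∃ m', E m' = E m := ⟨m, rfl⟩
  rw [mkSched, if_neg (by omega), dif_pos h, hinj h.choose_spec]

lemma mkSched_none {σ : ℕ → Finset (Fin n)} {M : ℕ} {E : ℕ → ℕ} {act : ℕ → Fin n}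
    {t : ℕ} (hM : M < t) (h : ∀ m, E m ≠ t) : mkSched σ M E act t = ∅ := by
  rw [mkSched, if_neg (by omega), dif_neg (by push_neg; exact h)]

lemma perNode {k : ℕ} (hk : 0 < k) {f : ∀ i : Fin n, List (∀ j, A j) → A i}
    (hsi : SelfIndepH f) (hkr : KRecall k f) (hconv : ConvergentH f)
    {H : List (∀ j, A j)} (hH : H ≠ []) {σ : ℕ → Finset (Fin n)} (hfair : Fair σ)
    {x : ℕ → ∀ j, A j} (hx : IsTraj f σ H x) {a : ∀ j, A j} {T1 : ℕ}
    (hT1 : ∀ t > T1, x t = a) (i : Fin n) :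
    ∃ Ti, ∀ t > Ti, f i (List.replicate t a) = a i := by
  by_contra hcon
  push_neg at hcon
  have hn : 0 < n := i.pos
  have hH1 : 0 < H.length := List.length_pos_iff.mpr hH
  set M := T1 + k + H.length + 1 with hMdef
  -- fact: beyond M, activated nodes applied to the all-`a` history return `a`
  have good : ∀ (j : Fin n) (t : ℕ), M < t → j ∈ σ t → f j (List.replicate t a) = a j := by
    intro j t ht hj
    have hxt : x t = a := hT1 t (by omega)
    have hrec := hx.2 t (by omega) j
    rw [if_pos hj] at hrec
    have he : f j (List.ofFn fun s : Fin t => x s) = f j (List.replicate t a) := by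
      apply evalLemma hsi hkr
      intro s hs hks j' _
      rw [hT1 s (by omega)]
    rw [he] at hrec
    rw [← hrec, hxt]
  choose nb hnb1 hnb2 using hcon
  choose ng hng1 hng2 using hfair
  obtain ⟨act, hact2, hacti⟩ : ∃ act : ℕ → Fin n,
      (∀ m, m % 3 = 2 → act m = ⟨(m / 3) % n, Nat.mod_lt _ hn⟩) ∧
      (∀ m, m % 3 ≠ 2 → act m = i) :=
    ⟨fun m => if h : m % 3 = 2 then ⟨(m / 3) % n, Nat.mod_lt _ hn⟩ else i,
      fun m h => by simp [h], fun m h => by simp [h]⟩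
  obtain ⟨E, hE0, hEs⟩ : ∃ E : ℕ → ℕ, E 0 = nb (M + k) ∧
      ∀ m, E (m+1) = if (m+1) % 3 = 0 then nb (E m + k) else ng (act (m+1)) (E m + k + 1) :=
    ⟨seqRec (fun m prev => if (m+1) % 3 = 0 then nb (prev + k)
        else ng (act (m+1)) (prev + k + 1)) (nb (M + k)), rfl, fun m => rfl⟩
  have hgap : ∀ m, E m + k < E (m+1) := by
    intro m
    rw [hEs m]
    split
    · exact hnb1 _
    · have := hng1 (act (m+1)) (E m + k + 1); omega
  have hmono : StrictMono E := strictMono_nat_of_lt_succ (fun m => by have := hgap m; omega)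
  have hMlt : ∀ m, M + m < E m := by
    intro m
    induction m with
    | zero => have := hnb1 (M + k); omega
    | succ m ih => have := hgap m; omega
  have hy : IsTraj f (mkSched σ M E act) H (traj f (mkSched σ M E act) H) := traj_isTraj hH
  set y := traj f (mkSched σ M E act) H with hydef
  have hyx : ∀ t ≤ M, y t = x t :=
    traj_unique hH hx hy M (fun t _ ht => mkSched_le ht)
  have hτfair : Fair (mkSched σ M E act) := by
    intro j T
    set m := 3 * (j.val + n * (T+1)) + 2 with hm
    have h2 : T + 1 ≤ n * (T+1) := Nat.le_mul_of_pos_left _ hn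
    refine ⟨E m, ?_, ?_⟩
    · have h1 := hMlt m
      omega
    · rw [mkSched_event hmono.injective (by have := hMlt m; omega)]
      have ham : act m = j := by
        rw [hact2 m (by omega)]
        apply Fin.ext
        show (m / 3) % n = j.val
        have h3 : m / 3 = j.val + n * (T+1) := by omega
        rw [h3, Nat.add_mul_mod_self_left, Nat.mod_eq_of_lt j.isLt]
      rw [ham]
      exact Finset.mem_singleton_self j
  -- "bad" intervals: the stretches during which coordinate i deviates from a
  set Bad : ℕ → Prop := fun t => ∃ m, m % 3 = 0 ∧ E m ≤ t ∧ t < E (m+1) with hBaddef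
  have hwin0 : ∀ s, s < E 0 → ¬ Bad s := by
    rintro s hs ⟨p, _, hple, _⟩
    have := hmono.monotone (Nat.zero_le p)
    omega
  have hwin : ∀ m, 0 < m → (m-1) % 3 ≠ 0 → ∀ s, E (m-1) < s → s < E m → ¬ Bad s := by
    rintro m hm0 hm3 s h1 h2 ⟨p, hp0, hple, hplt⟩
    have hpm : p < m := by
      by_contra hc
      push_neg at hc
      have := hmono.monotone hc
      omega
    have hpm2 : m - 1 < p + 1 := hmono.lt_iff_lt.mp (by omega)
    have hpe : p = m - 1 := by omega
    exact hm3 (hpe ▸ hp0)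
  have hwinpre : ∀ m, m % 3 ≠ 1 → ∀ s, E m - k ≤ s → s < E m → ¬ Bad s := by
    intro m hm3 s h1 h2
    rcases Nat.eq_zero_or_pos m with h0 | h0
    · subst h0; exact hwin0 s h2
    · refine hwin m h0 (by omega) s ?_ h2
      have hg := hgap (m-1)
      have hm1 : m - 1 + 1 = m := by omega
      rw [hm1] at hg
      omega
  have hnotBadE : ∀ m, m % 3 ≠ 0 → ¬ Bad (E m) := by
    rintro m hm3 ⟨p, hp0, hple, hplt⟩
    have h1 : p ≤ m := by
      by_contra hc
      push_neg at hc
      have := hmono hc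
      omega
    have h2 : m < p + 1 := hmono.lt_iff_lt.mp (by omega)
    have : p = m := by omega
    exact hm3 (this ▸ hp0)
  -- the invariant
  have INV : ∀ t, T1 < t → (∀ j, j ≠ i → y t j = a j) ∧ (¬ Bad t → y t i = a i) := by
    intro t
    induction t using Nat.strong_induction_on with
    | _ t ih =>
      intro hTt
      by_cases htM : t ≤ M
      · rw [hyx t htM, hT1 t hTt]
        exact ⟨fun j _ => rfl, fun _ => rfl⟩
      · push_neg at htM
        have ht1 : H.length ≤ t := by omega
        have hQprev := ih (t-1) (by omega) (by omega)
        by_cases hev : ∃ m, E m = t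
        · obtain ⟨m, hm⟩ := hev
          have hτt : mkSched σ M E act t = {act m} := by
            rw [← hm]; exact mkSched_event hmono.injective (by have := hMlt m; omega)
          have hkeep : ∀ j, j ≠ act m → y t j = y (t-1) j := by
            intro j hj
            rw [hy.2 t ht1 j, hτt, if_neg (by simpa using hj)]
          have hco : y t (act m) = f (act m) (List.ofFn fun s : Fin t => y s) := by
            rw [hy.2 t ht1 (act m), hτt, if_pos (Finset.mem_singleton_self _)]
          by_cases hm3 : m % 3 = 0
          · have hBadt : Bad t := ⟨m, hm3, by omega, by have := hgap m; omega⟩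
            have hai : act m = i := hacti m (by omega)
            exact ⟨fun j hj => by rw [hkeep j (by rw [hai]; exact hj), hQprev.1 j hj],
              fun hnb => absurd hBadt hnb⟩
          · -- a "good" event: the activated node moves to (or stays at) a
            have hwindow : ∀ s, s < t → t - k ≤ s → ∀ j, j ≠ act m → y s j = a j := by
              intro s hs hks j hj
              have hsT1 : T1 < s := by omega
              by_cases hji : j = i
              · subst hji
                have hm2 : m % 3 = 2 := by
                  by_contra hc
                  exact hj (hacti m hc).symm
                refine (ih s hs hsT1).2 (hwinpre m (by omega) s (by omega) (by omega))
              · exact (ih s hs hsT1).1 j hji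
            have hm1 : m - 1 + 1 = m := by omega
            have hσm : act m ∈ σ t := by
              have hE' := hEs (m-1)
              rw [hm1] at hE'
              rw [if_neg hm3] at hE'
              rw [← hm, hE']
              exact hng2 (act m) (E (m-1) + k + 1)
            have hval : y t (act m) = a (act m) := by
              rw [hco, evalLemma hsi hkr _ _ _ _ hwindow, good (act m) t htM hσm]
            constructor
            · intro j hj
              by_cases hja : j = act m
              · rw [hja]; exact hval
              · rw [hkeep j hja, hQprev.1 j hj]
            · intro _
              by_cases hia : i = act m
              · rw [hia]; exact hval
              · rw [hkeep i hia]
                apply hQprev.2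
                have hm2 : m % 3 = 2 := by
                  by_contra hc
                  exact hia (hacti m hc).symm
                exact hwinpre m (by omega) (t-1) (by omega) (by omega)
        · push_neg at hev
          have hτt : mkSched σ M E act t = ∅ := mkSched_none htM hev
          have hkeep : ∀ j, y t j = y (t-1) j := by
            intro j
            rw [hy.2 t ht1 j, hτt, if_neg (Finset.notMem_empty j)]
          refine ⟨fun j hj => by rw [hkeep j, hQprev.1 j hj], fun hnb => ?_⟩
          rw [hkeep i]
          apply hQprev.2
          rintro ⟨p, hp0, hple, hplt⟩
          by_cases hlt : t < E (p+1)
          · exact hnb ⟨p, hp0, by omega, hlt⟩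
          · exact hev (p+1) (by omega)
  -- at each bad event the i-th coordinate leaves a
  have hbadval : ∀ m, m % 3 = 0 → y (E m) i ≠ a i := by
    intro m hm3
    have htM : M < E m := by have := hMlt m; omega
    have ht1 : H.length ≤ E m := by omega
    have hτt : mkSched σ M E act (E m) = {act m} := mkSched_event hmono.injective htM
    have hco : y (E m) i = f i (List.ofFn fun s : Fin (E m) => y s) := by
      rw [hy.2 (E m) ht1 i, hτt, hacti m (by omega), if_pos (Finset.mem_singleton_self _)]
    have hwindow : ∀ s, s < E m → E m - k ≤ s → ∀ j, j ≠ i → y s j = a j := by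
      intro s hs hks j hj
      exact (INV s (by omega)).1 j hj
    rw [hco, evalLemma hsi hkr _ _ _ _ hwindow]
    rcases Nat.eq_zero_or_pos m with h0 | h0
    · subst h0; rw [hE0]; exact hnb2 (M+k)
    · have hm1 : m - 1 + 1 = m := by omega
      have hE' := hEs (m-1)
      rw [hm1, if_pos hm3] at hE'
      rw [hE']
      exact hnb2 _
  -- derive the contradiction with convergence
  obtain ⟨b, Tb, hb⟩ := hconv H hH _ hτfair y hy
  set m0 := 3 * (Tb + 1) with hm0
  have h1 : Tb < E m0 := by have := hMlt m0; omega
  have h2 : Tb < E (m0+1) := by have := hMlt (m0+1); omega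
  have e1 : y (E m0) = b := hb _ h1
  have e2 : y (E (m0+1)) = b := hb _ h2
  have v1 : y (E m0) i ≠ a i := hbadval m0 (by omega)
  have v2 : y (E (m0+1)) i = a i := by
    refine (INV (E (m0+1)) (by have := hMlt (m0+1); omega)).2 (hnotBadE (m0+1) (by omega))
  rw [e1] at v1
  rw [e2] at v2
  exact v1 v2



/-- If a convergent interaction system has reaction functions that are all
self-independent and have `k`-recall for some positive `k`, then the system is
strongly convergent: whenever the `(H,σ)`-trajectory converges to `a` for a fair
schedule `σ`, there exists `T` such that for every fair schedule `σ'` agreeing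
with `σ` on steps `1` through `T`, the `(H,σ')`-trajectory also converges to `a`. -/
theorem stmt19 (n : ℕ) (A : Fin n → Type*) (k : ℕ) (hk : 0 < k)
    (f : ∀ i : Fin n, List (∀ j, A j) → A i)
    (hsi : SelfIndepH f) (hkr : KRecall k f) (hconv : ConvergentH f) :
    ∀ H : List (∀ j, A j), H ≠ [] →
      ∀ σ : ℕ → Finset (Fin n), Fair σ →
        ∀ x : ℕ → ∀ j, A j, IsTraj f σ H x →
          ∀ a : ∀ j, A j, ConvTo x a →
            ∃ T : ℕ, ∀ σ' : ℕ → Finset (Fin n), Fair σ' →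
              (∀ t : ℕ, 1 ≤ t → t ≤ T → σ' t = σ t) →
              ∀ x' : ℕ → ∀ j, A j, IsTraj f σ' H x' → ConvTo x' a := by
  intro H hH σ hfair x hx a ha
  obtain ⟨T1, hT1⟩ := ha
  have key : ∀ i : Fin n, ∃ Ti, ∀ t > Ti, f i (List.replicate t a) = a i :=
    fun i => perNode hk hsi hkr hconv hH hfair hx hT1 i
  choose Tf hTf using key
  set T3 := Finset.univ.sup Tf with hT3
  set T := T1 + k + H.length + T3 + 1 with hTdef
  refine ⟨T, ?_⟩
  intro σ' hfair' hag x' hx'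
  have hagree : ∀ t ≤ T, x' t = x t := traj_unique hH hx hx' T hag
  refine ⟨T, ?_⟩
  have main : ∀ t, T1 < t → x' t = a := by
    intro t
    induction t using Nat.strong_induction_on with
    | _ t ih =>
      intro hT1t
      by_cases htT : t ≤ T
      · rw [hagree t htT]; exact hT1 t hT1t
      · push_neg at htT
        have hH1 : 0 < H.length := List.length_pos_iff.mpr hH
        have ht1 : H.length ≤ t := by omega
        funext j
        rw [hx'.2 t ht1 j]
        split
        · have he : f j (List.ofFn fun s : Fin t => x' s) = f j (List.replicate t a) := by
            apply evalLemma hsi hkr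
            intro s hs hks j' _
            rw [ih s hs (by omega)]
          rw [he]
          have hj3 : Tf j ≤ T3 := Finset.le_sup (Finset.mem_univ j)
          exact hTf j t (by omega)
        · exact congrFun (ih (t-1) (by omega) (by omega)) j
  intro t ht
  exact main t (by omega)
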